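/- (Maurer's lemma.) Let X be a random variable taking values in [0,1] with mean μ, let X₁,…,Xₙ be i.i.d. copies of X, and let X'₁,…,X'ₙ be i.i.d. Bernoulli(μ) random variables. Then for any convex function f: [0,1]ⁿ → ℝ, E[f(X₁,…,Xₙ)] ≤ E[f(X'₁,…,X'ₙ)]. -/

import Mathlib

open MeasureTheory

namespace Stmt10Aux

/-- `Fin.cons` specialized to real tuples, to help elaboration. -/
def fc {n : ℕ} (x : ℝ) (y : Fin n → ℝ) : Fin (n+1) → ℝ := Fin.cons x y

@[simp] lemma fc_zero {n : ℕ} (x : ℝ) (y : Fin n → ℝ) : fc x y 0 = x := rfl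

@[simp] lemma fc_succ {n : ℕ} (x : ℝ) (y : Fin n → ℝ) (j : Fin n) :
    fc x y j.succ = y j := rfl

lemma fc_self_tail {n : ℕ} (x : Fin (n+1) → ℝ) : fc (x 0) (Fin.tail x) = x :=
  Fin.cons_self_tail x

lemma cons_mem_Icc {n : ℕ} {x : ℝ} {y : Fin n → ℝ} (hx : x ∈ Set.Icc (0:ℝ) 1)
    (hy : y ∈ Set.Icc (0 : Fin n → ℝ) 1) :
    fc x y ∈ Set.Icc (0 : Fin (n+1) → ℝ) 1 := by
  obtain ⟨hy0, hy1⟩ := hy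
  refine ⟨fun i => ?_, fun i => ?_⟩ <;>
    refine Fin.cases ?_ (fun j => ?_) i <;>
    simp only [fc_zero, fc_succ, Pi.zero_apply, Pi.one_apply]
  · exact hx.1
  · exact hy0 j
  · exact hx.2
  · exact hy1 j

lemma cons_comb {n : ℕ} (x x' : ℝ) (y y' : Fin n → ℝ) (a b : ℝ) :
    a • fc x y + b • fc x' y' = fc (a * x + b * x') (a • y + b • y') := by
  funext i
  refine Fin.cases ?_ (fun j => ?_) i <;> simp

lemma smul_add_self {n : ℕ} {a b : ℝ} (hab : a + b = 1) (y : Fin n → ℝ) :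
    a • y + b • y = y := by
  funext j
  simp only [Pi.add_apply, Pi.smul_apply, smul_eq_mul, ← add_mul, hab, one_mul]

/-- convexity of the slice in the first coordinate -/
lemma slice_head_convex {n : ℕ} {f : (Fin (n+1) → ℝ) → ℝ}
    (hconv : ConvexOn ℝ (Set.Icc (0 : Fin (n+1) → ℝ) 1) f)
    {y : Fin n → ℝ} (hy : y ∈ Set.Icc (0 : Fin n → ℝ) 1)
    {x x' : ℝ} (hx : x ∈ Set.Icc (0:ℝ) 1) (hx' : x' ∈ Set.Icc (0:ℝ) 1)
    {a b : ℝ} (ha : 0 ≤ a) (hb : 0 ≤ b) (hab : a + b = 1) :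
    f (fc (a * x + b * x') y) ≤ a * f (fc x y) + b * f (fc x' y) := by
  have key : fc (a * x + b * x') y = a • fc x y + b • fc x' y := by
    rw [cons_comb x x' y y a b, smul_add_self hab]
  rw [key]
  exact hconv.2 (cons_mem_Icc hx hy) (cons_mem_Icc hx' hy) ha hb hab

/-- convexity of the slice in the tail coordinates -/
lemma slice_tail_convexOn {n : ℕ} {f : (Fin (n+1) → ℝ) → ℝ}
    (hconv : ConvexOn ℝ (Set.Icc (0 : Fin (n+1) → ℝ) 1) f)
    {c : ℝ} (hc : c ∈ Set.Icc (0:ℝ) 1) :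
    ConvexOn ℝ (Set.Icc (0 : Fin n → ℝ) 1) (fun y => f (fc c y)) := by
  refine ⟨convex_Icc _ _, fun y hy y' hy' a b ha hb hab => ?_⟩
  have key : fc c (a • y + b • y') = a • fc c y + b • fc c y' := by
    rw [cons_comb c c y y' a b]
    congr 1
    rw [← add_mul, hab, one_mul]
  simp only [key, smul_eq_mul]
  exact hconv.2 (cons_mem_Icc hc hy) (cons_mem_Icc hc hy') ha hb hab

lemma measurable_fc_left {n : ℕ} (y : Fin n → ℝ) :
    Measurable (fun x : ℝ => fc x y) := by
  refine measurable_pi_iff.2 fun i => ?_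
  refine Fin.cases ?_ (fun j => ?_) i
  · simpa using measurable_id'
  · simp only [fc_succ]; exact measurable_const

lemma measurable_fc_pair {n : ℕ} :
    Measurable (fun z : ℝ × (Fin n → ℝ) => fc z.1 z.2) := by
  refine measurable_pi_iff.2 fun i => ?_
  refine Fin.cases ?_ (fun j => ?_) i
  · simpa using measurable_fst
  · simp only [fc_succ]
    exact (measurable_pi_apply j).comp measurable_snd

lemma integrable_of_bounded {α : Type*} [MeasurableSpace α] {m : Measure α}
    [IsFiniteMeasure m] {f : α → ℝ} (hf : Measurable f) {s : Set α}
    (hs : ∀ᵐ x ∂m, x ∈ s) {C : ℝ} (hC : ∀ x ∈ s, |f x| ≤ C) : Integrable f m :=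
  ⟨hf.aestronglyMeasurable,
    HasFiniteIntegral.of_bounded (C := C) (hs.mono fun x hx => by
      simpa [Real.norm_eq_abs] using hC x hx)⟩

/-- a.e. membership of the cube for a product of measures supported on `[0,1]`. -/
lemma ae_cube {m : Measure ℝ} [IsProbabilityMeasure m]
    (hm : ∀ᵐ x ∂m, x ∈ Set.Icc (0:ℝ) 1) (n : ℕ) :
    ∀ᵐ y ∂(Measure.pi fun _ : Fin n => m), y ∈ Set.Icc (0 : Fin n → ℝ) 1 := by
  have h1 : (Measure.pi fun _ : Fin n => m) (Set.Icc (0 : Fin n → ℝ) 1) = 1 := by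
    rw [← Set.pi_univ_Icc, Measure.pi_pi]
    have hm1 : m (Set.Icc (0:ℝ) 1) = 1 := by
      refine le_antisymm prob_le_one ?_
      calc (1:ENNReal) = m Set.univ := measure_univ.symm
        _ ≤ m (Set.Icc (0:ℝ) 1) := by
            refine measure_mono_ae ?_
            filter_upwards [hm] with x hx _ using hx
    simp [hm1]
  have hmeas : MeasurableSet (Set.Icc (0 : Fin n → ℝ) 1) := by
    rw [← Set.pi_univ_Icc]
    exact MeasurableSet.univ_pi fun i => measurableSet_Icc
  have h2 : (Measure.pi fun _ : Fin n => m) (Set.Icc (0 : Fin n → ℝ) 1)ᶜ = 0 := by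
    rw [measure_compl hmeas (by simp), h1]
    simp
  rw [ae_iff]
  exact h2

end Stmt10Aux

namespace Stmt10Aux

lemma measurable_fc_right {n : ℕ} (c : ℝ) :
    Measurable (fun y : Fin n → ℝ => fc c y) := by
  refine measurable_pi_iff.2 fun i => ?_
  refine Fin.cases ?_ (fun j => ?_) i
  · simpa using measurable_const
  · simp only [fc_succ]
    exact measurable_pi_apply j

lemma integrable_dirac' {g : ℝ → ℝ} (hg : Measurable g) (a : ℝ) :
    Integrable g (Measure.dirac a) :=
  (integrable_const (g a)).congr (ae_eq_dirac' hg).symm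

lemma integral_bern {p : ℝ} (hp0 : 0 ≤ p) (hp1 : p ≤ 1) {ν : Measure ℝ}
    (hν : ν = ENNReal.ofReal p • Measure.dirac (1:ℝ)
        + ENNReal.ofReal (1 - p) • Measure.dirac (0:ℝ))
    {g : ℝ → ℝ} (hg : Measurable g) :
    ∫ x, g x ∂ν = p * g 1 + (1 - p) * g 0 := by
  have hd1 := integrable_dirac' hg (1:ℝ)
  have hd0 := integrable_dirac' hg (0:ℝ)
  rw [hν, integral_add_measure (hd1.smul_measure (by simp)) (hd0.smul_measure (by simp)),
    integral_smul_measure, integral_smul_measure, integral_dirac, integral_dirac,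
    ENNReal.toReal_ofReal hp0, ENNReal.toReal_ofReal (by linarith)]
  simp [smul_eq_mul]

lemma ae_bern_Icc {p : ℝ} {ν : Measure ℝ}
    (hν : ν = ENNReal.ofReal p • Measure.dirac (1:ℝ)
        + ENNReal.ofReal (1 - p) • Measure.dirac (0:ℝ)) :
    ∀ᵐ x ∂ν, x ∈ Set.Icc (0:ℝ) 1 := by
  rw [ae_iff, hν]
  have h1 : (1:ℝ) ∈ Set.Icc (0:ℝ) 1 := ⟨zero_le_one, le_rfl⟩
  have h0 : (0:ℝ) ∈ Set.Icc (0:ℝ) 1 := ⟨le_rfl, zero_le_one⟩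
  simp [Measure.add_apply, Measure.smul_apply, Measure.dirac_apply, Set.indicator,
    h0, h1]

lemma dim_one_step {μ : Measure ℝ} [IsProbabilityMeasure μ]
    (hsupp : ∀ᵐ x ∂μ, x ∈ Set.Icc (0:ℝ) 1) {p : ℝ} (hp : p = ∫ x, x ∂μ)
    {g : ℝ → ℝ} (hg : Integrable g μ)
    (hcvx : ∀ x ∈ Set.Icc (0:ℝ) 1, g x ≤ x * g 1 + (1 - x) * g 0) :
    ∫ x, g x ∂μ ≤ p * g 1 + (1 - p) * g 0 := by
  have hid : Integrable (fun x : ℝ => x) μ :=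
    integrable_of_bounded measurable_id hsupp (C := 1)
      (fun x hx => abs_le.2 ⟨by linarith [hx.1], hx.2⟩)
  have hmul : Integrable (fun x : ℝ => x * g 1) μ := hid.mul_const _
  have hsub : Integrable (fun x : ℝ => (1 - x) * g 0) μ :=
    ((integrable_const (1:ℝ)).sub hid).mul_const _
  have hint : Integrable (fun x => x * g 1 + (1 - x) * g 0) μ := hmul.add hsub
  have h1 : ∫ x, g x ∂μ ≤ ∫ x, (x * g 1 + (1 - x) * g 0) ∂μ :=
    integral_mono_ae hg hint (hsupp.mono fun x hx => hcvx x hx)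
  refine h1.trans_eq ?_
  rw [integral_add hmul hsub, integral_mul_const, integral_mul_const, integral_sub (integrable_const 1) hid,
    integral_const]
  simp [hp]

/-- Fubini reduction along the first coordinate. -/
lemma fubini_cons {m : Measure ℝ} [IsProbabilityMeasure m]
    (hm : ∀ᵐ x ∂m, x ∈ Set.Icc (0:ℝ) 1)
    {n : ℕ} {f : (Fin (n+1) → ℝ) → ℝ} (hfm : Measurable f)
    {C : ℝ} (hbd : ∀ x ∈ Set.Icc (0 : Fin (n+1) → ℝ) 1, |f x| ≤ C) :
    Integrable (fun z : ℝ × (Fin n → ℝ) => f (fc z.1 z.2))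
        (m.prod (Measure.pi fun _ : Fin n => m))
      ∧ (∫ x, f x ∂(Measure.pi fun _ : Fin (n+1) => m))
        = ∫ y, ∫ x, f (fc x y) ∂m ∂(Measure.pi fun _ : Fin n => m) := by
  have e := measurePreserving_piFinSuccAbove (fun _ : Fin (n+1) => m) 0
  have hemb := (MeasurableEquiv.piFinSuccAbove (fun _ : Fin (n+1) => ℝ) 0).measurableEmbedding
  have hcomp : (fun z : ℝ × (Fin n → ℝ) => f (fc z.1 z.2))
      ∘ (MeasurableEquiv.piFinSuccAbove (fun _ : Fin (n+1) => ℝ) 0) = f := by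
    funext v
    simp only [Function.comp_apply, MeasurableEquiv.piFinSuccAbove_apply]
    congr 1
    funext i
    refine Fin.cases ?_ (fun j => ?_) i
    · rfl
    · show v (Fin.succAbove 0 j) = v j.succ
      rw [Fin.zero_succAbove]
  have hfint : Integrable f (Measure.pi fun _ : Fin (n+1) => m) :=
    integrable_of_bounded hfm (ae_cube hm (n+1)) hbd
  have hFint : Integrable (fun z : ℝ × (Fin n → ℝ) => f (fc z.1 z.2))
      (m.prod (Measure.pi fun _ : Fin n => m)) := by
    rw [← e.integrable_comp_emb hemb, hcomp]
    exact hfint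
  refine ⟨hFint, ?_⟩
  have h1 : (∫ x, f x ∂(Measure.pi fun _ : Fin (n+1) => m))
      = ∫ z, f (fc z.1 z.2) ∂(m.prod (Measure.pi fun _ : Fin n => m)) := by
    rw [← e.integral_comp hemb]
    exact integral_congr_ae (ae_of_all _ fun v => (congrFun hcomp v).symm)
  rw [h1]
  exact integral_prod_symm _ hFint

end Stmt10Aux

namespace Stmt10Aux

lemma key (μ : Measure ℝ) [IsProbabilityMeasure μ]
    (hsupp : ∀ᵐ x ∂μ, x ∈ Set.Icc (0:ℝ) 1)
    (p : ℝ) (hp : p = ∫ x, x ∂μ) (hp0 : 0 ≤ p) (hp1 : p ≤ 1)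
    (ν : Measure ℝ) [IsProbabilityMeasure ν]
    (hν : ν = ENNReal.ofReal p • Measure.dirac (1:ℝ)
        + ENNReal.ofReal (1 - p) • Measure.dirac (0:ℝ)) :
    ∀ (n : ℕ) (f : (Fin n → ℝ) → ℝ) (C : ℝ), Measurable f →
      ConvexOn ℝ (Set.Icc (0 : Fin n → ℝ) 1) f →
      (∀ x ∈ Set.Icc (0 : Fin n → ℝ) 1, |f x| ≤ C) →
      (∫ x, f x ∂(Measure.pi fun _ : Fin n => μ))
        ≤ ∫ x, f x ∂(Measure.pi fun _ : Fin n => ν) := by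
  intro n
  induction n with
  | zero =>
    intro f C _ _ _
    have hf : f = fun _ => f (fun i => i.elim0) :=
      funext fun x => congrArg f (Subsingleton.elim _ _)
    rw [hf, integral_const, integral_const]
    simp
  | succ n ih =>
    intro f C hfm hconv hbd
    have hνsupp : ∀ᵐ x ∂ν, x ∈ Set.Icc (0:ℝ) 1 := ae_bern_Icc hν
    have h1m : (1:ℝ) ∈ Set.Icc (0:ℝ) 1 := ⟨zero_le_one, le_rfl⟩
    have h0m : (0:ℝ) ∈ Set.Icc (0:ℝ) 1 := ⟨le_rfl, zero_le_one⟩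
    set G : (Fin n → ℝ) → ℝ := fun y => p * f (fc 1 y) + (1 - p) * f (fc 0 y) with hG
    have hGm : Measurable G :=
      ((hfm.comp (measurable_fc_right 1)).const_mul p).add
        ((hfm.comp (measurable_fc_right 0)).const_mul (1 - p))
    have hGconv : ConvexOn ℝ (Set.Icc (0 : Fin n → ℝ) 1) G := by
      have h1 := (slice_tail_convexOn hconv h1m).smul hp0
      have h0 := (slice_tail_convexOn hconv h0m).smul (by linarith : (0:ℝ) ≤ 1 - p)
      exact h1.add h0
    have hGbd : ∀ y ∈ Set.Icc (0 : Fin n → ℝ) 1, |G y| ≤ C := by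
      intro y hy
      have b1 : |f (fc 1 y)| ≤ C := hbd _ (cons_mem_Icc h1m hy)
      have b0 : |f (fc 0 y)| ≤ C := hbd _ (cons_mem_Icc h0m hy)
      calc |G y| ≤ |p * f (fc 1 y)| + |(1 - p) * f (fc 0 y)| := abs_add_le _ _
        _ = p * |f (fc 1 y)| + (1 - p) * |f (fc 0 y)| := by
            rw [abs_mul, abs_mul, abs_of_nonneg hp0, abs_of_nonneg (sub_nonneg.2 hp1)]
        _ ≤ p * C + (1 - p) * C := by
            have e1 := mul_le_mul_of_nonneg_left b1 hp0
            have e0 := mul_le_mul_of_nonneg_left b0 (by linarith : (0:ℝ) ≤ 1 - p)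
            linarith
        _ = C := by ring
    obtain ⟨hFintμ, hμeq⟩ := fubini_cons hsupp hfm hbd
    obtain ⟨hFintν, hνeq⟩ := fubini_cons hνsupp hfm hbd
    have hinner : ∀ y ∈ Set.Icc (0 : Fin n → ℝ) 1, ∫ x, f (fc x y) ∂μ ≤ G y := by
      intro y hy
      refine dim_one_step hsupp hp ?_ ?_
      · exact integrable_of_bounded (hfm.comp (measurable_fc_left y)) hsupp
          (fun x hx => hbd _ (cons_mem_Icc hx hy))
      · intro x hx
        have h := slice_head_convex (x := 1) (x' := 0) (a := x) (b := 1 - x)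
          hconv hy h1m h0m hx.1 (by linarith [hx.2]) (by ring)
        simpa using h
    have hGinner : ∀ y : Fin n → ℝ, ∫ x, f (fc x y) ∂ν = G y := fun y =>
      integral_bern hp0 hp1 hν (hfm.comp (measurable_fc_left y))
    have hI1 : Integrable (fun y => ∫ x, f (fc x y) ∂μ)
        (Measure.pi fun _ : Fin n => μ) := hFintμ.integral_prod_right
    have hI2μ : Integrable G (Measure.pi fun _ : Fin n => μ) :=
      integrable_of_bounded hGm (ae_cube hsupp n) hGbd
    calc (∫ x, f x ∂(Measure.pi fun _ : Fin (n+1) => μ))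
        = ∫ y, ∫ x, f (fc x y) ∂μ ∂(Measure.pi fun _ : Fin n => μ) := hμeq
      _ ≤ ∫ y, G y ∂(Measure.pi fun _ : Fin n => μ) :=
          integral_mono_ae hI1 hI2μ ((ae_cube hsupp n).mono fun y hy => hinner y hy)
      _ ≤ ∫ y, G y ∂(Measure.pi fun _ : Fin n => ν) := ih G C hGm hGconv hGbd
      _ = ∫ y, ∫ x, f (fc x y) ∂ν ∂(Measure.pi fun _ : Fin n => ν) :=
          integral_congr_ae (ae_of_all _ fun y => (hGinner y).symm)
      _ = ∫ x, f x ∂(Measure.pi fun _ : Fin (n+1) => ν) := hνeq.symm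

lemma bddAbove_convexOn : ∀ (n : ℕ) (f : (Fin n → ℝ) → ℝ),
    ConvexOn ℝ (Set.Icc (0 : Fin n → ℝ) 1) f →
    ∃ M, ∀ x ∈ Set.Icc (0 : Fin n → ℝ) 1, f x ≤ M := by
  intro n
  induction n with
  | zero =>
    intro f _
    exact ⟨f 0, fun x _ => le_of_eq (congrArg f (Subsingleton.elim x 0))⟩
  | succ n ih =>
    intro f hconv
    have h1m : (1:ℝ) ∈ Set.Icc (0:ℝ) 1 := ⟨zero_le_one, le_rfl⟩
    have h0m : (0:ℝ) ∈ Set.Icc (0:ℝ) 1 := ⟨le_rfl, zero_le_one⟩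
    obtain ⟨M0, hM0⟩ := ih _ (slice_tail_convexOn hconv h0m)
    obtain ⟨M1, hM1⟩ := ih _ (slice_tail_convexOn hconv h1m)
    refine ⟨max M0 M1, fun x hx => ?_⟩
    have hxt : Fin.tail x ∈ Set.Icc (0 : Fin n → ℝ) 1 :=
      ⟨fun j => hx.1 j.succ, fun j => hx.2 j.succ⟩
    have hx0 : (0:ℝ) ≤ x 0 := hx.1 0
    have hx1 : x 0 ≤ 1 := hx.2 0
    have h := slice_head_convex (x := 1) (x' := 0) (a := x 0) (b := 1 - x 0)
      hconv hxt h1m h0m hx0 (by linarith) (by ring)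
    rw [show x 0 * 1 + (1 - x 0) * 0 = x 0 by ring, fc_self_tail] at h
    refine h.trans ?_
    have e1 := mul_le_mul_of_nonneg_left
      ((hM1 _ hxt).trans (le_max_right M0 M1)) hx0
    have e0 := mul_le_mul_of_nonneg_left
      ((hM0 _ hxt).trans (le_max_left M0 M1)) (by linarith : (0:ℝ) ≤ 1 - x 0)
    have : x 0 * max M0 M1 + (1 - x 0) * max M0 M1 = max M0 M1 := by ring
    linarith

lemma abs_bound_convexOn (n : ℕ) (f : (Fin n → ℝ) → ℝ)
    (hconv : ConvexOn ℝ (Set.Icc (0 : Fin n → ℝ) 1) f) :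
    ∃ C, ∀ x ∈ Set.Icc (0 : Fin n → ℝ) 1, |f x| ≤ C := by
  obtain ⟨M, hM⟩ := bddAbove_convexOn n f hconv
  set h : Fin n → ℝ := fun _ => (1:ℝ)/2 with hh
  refine ⟨max M (M - 2 * f h), fun x hx => ?_⟩
  have hmem2 : (1 : Fin n → ℝ) - x ∈ Set.Icc (0 : Fin n → ℝ) 1 := by
    constructor
    · intro i
      have h1i : x i ≤ 1 := hx.2 i
      simp only [Pi.sub_apply, Pi.one_apply, Pi.zero_apply]
      linarith
    · intro i
      have h0i : (0:ℝ) ≤ x i := hx.1 i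
      simp only [Pi.sub_apply, Pi.one_apply, Pi.zero_apply]
      linarith
  have harg : (1/2 : ℝ) • x + (1/2 : ℝ) • ((1 : Fin n → ℝ) - x) = h := by
    funext i
    simp only [Pi.add_apply, Pi.smul_apply, Pi.sub_apply, Pi.one_apply, smul_eq_mul, hh]
    ring
  have hmid := hconv.2 hx hmem2 (by norm_num : (0:ℝ) ≤ 1/2)
    (by norm_num : (0:ℝ) ≤ 1/2) (by norm_num)
  rw [harg] at hmid
  simp only [smul_eq_mul] at hmid
  have h1x := hM _ hmem2
  refine abs_le.2 ⟨?_, (hM x hx).trans (le_max_left _ _)⟩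
  have := le_max_right M (M - 2 * f h)
  linarith

end Stmt10Aux


/-- Maurer's lemma: let `μ` be the law of a random variable with values in
`[0,1]` and mean `p`, and let `ν` be the Bernoulli(`p`) law on `ℝ`.  For any convex
function `f : [0,1]ⁿ → ℝ`, `E[f(X₁,…,Xₙ)] ≤ E[f(X'₁,…,X'ₙ)]`, where the `Xᵢ` are i.i.d.
with law `μ` and the `X'ᵢ` are i.i.d. Bernoulli(`p`). -/
theorem stmt10 (n : ℕ) (μ : Measure ℝ) [IsProbabilityMeasure μ]
    (hsupp : ∀ᵐ x ∂μ, x ∈ Set.Icc (0:ℝ) 1)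
    (p : ℝ) (hp : p = ∫ x, x ∂μ)
    (ν : Measure ℝ) [IsProbabilityMeasure ν]
    (hν : ν = ENNReal.ofReal p • Measure.dirac (1:ℝ)
        + ENNReal.ofReal (1 - p) • Measure.dirac (0:ℝ))
    (f : (Fin n → ℝ) → ℝ) (hfm : Measurable f)
    (hconv : ConvexOn ℝ (Set.Icc (0 : Fin n → ℝ) 1) f)
    (hint1 : Integrable f (Measure.pi fun _ : Fin n => μ))
    (hint2 : Integrable f (Measure.pi fun _ : Fin n => ν)) :
    (∫ x, f x ∂(Measure.pi fun _ : Fin n => μ))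
      ≤ ∫ x, f x ∂(Measure.pi fun _ : Fin n => ν) := by
  obtain ⟨C, hC⟩ := Stmt10Aux.abs_bound_convexOn n f hconv
  have hid : Integrable (fun x : ℝ => x) μ :=
    Stmt10Aux.integrable_of_bounded measurable_id hsupp (C := 1)
      (fun x hx => abs_le.2 ⟨by linarith [hx.1], hx.2⟩)
  have hp0 : 0 ≤ p := hp ▸ integral_nonneg_of_ae (hsupp.mono fun x hx => hx.1)
  have hp1 : p ≤ 1 := by
    rw [hp]
    calc ∫ x, x ∂μ ≤ ∫ _x, (1:ℝ) ∂μ :=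
          integral_mono_ae hid (integrable_const 1) (hsupp.mono fun x hx => hx.2)
      _ = 1 := by simp
  exact Stmt10Aux.key μ hsupp p hp hp0 hp1 ν hν n f C hfm hconv hC
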